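/- (Newton correction step.) Let f ∈ ℂ⟦x⟧ have zero constant coefficient, let n ≥ 1, let g₀ ∈ ℂ⟦x⟧ have constant coefficient 1, and let h ∈ ℂ⟦x⟧ satisfy h ≡ 0 (mod x^n). If δ(g₀) ≡ g₀ · (δ(f) + δ(h)) (mod x^{2n}), then exp(f) ≡ g₀ · (1 − h) (mod x^{2n}). -/

import Mathlib

open PowerSeries

/-- `exp(f)`: substitution of `f` (with nilpotent, i.e. zero, constant coefficient)
into the exponential series `Σ_{n≥0} xⁿ/n!`.  Since the constant coefficient of `f`
vanishes, the coefficient of degree `d` only receives contributions from `f^n` with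
`n ≤ d`, so the following finite sum computes it. -/
noncomputable def expPS (f : PowerSeries ℂ) : PowerSeries ℂ :=
  PowerSeries.mk fun d => ∑ n ∈ Finset.range (d + 1),
    PowerSeries.coeff d (f ^ n) / (n.factorial : ℂ)

/-- The operator `δh = x · h′`, where `h′` is the formal derivative. -/
noncomputable def delta (h : PowerSeries ℂ) : PowerSeries ℂ :=
  PowerSeries.X * h.derivativeFun

/-- `a ≡ b (mod x^N)`: the coefficients of `a` and `b` agree in every degree `< N`. -/
def modX (N : ℕ) (a b : PowerSeries ℂ) : Prop :=
  ∀ i < N, PowerSeries.coeff i a = PowerSeries.coeff i b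

/-- The `k`-th block (of size `m`) of a power series: the polynomial (as a power
series) of degree `< m` whose coefficient of `x^j` is the coefficient of `x^{km+j}`. -/
noncomputable def blk (m k : ℕ) (h : PowerSeries ℂ) : PowerSeries ℂ :=
  PowerSeries.mk fun j => if j < m then PowerSeries.coeff (k * m + j) h else 0

private lemma coeff_derivativeFun' (f : PowerSeries ℂ) (n : ℕ) :
    PowerSeries.coeff n f.derivativeFun = PowerSeries.coeff (n + 1) f * (n + 1) :=
  PowerSeries.coeff_derivative f n

private lemma coeff_pow_zero {f : PowerSeries ℂ} (hf : PowerSeries.constantCoeff f = 0)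
    {m k : ℕ} (h : k < m) : PowerSeries.coeff k (f ^ m) = 0 := by
  have hd : (PowerSeries.X : PowerSeries ℂ) ^ m ∣ f ^ m :=
    pow_dvd_pow_of_dvd (PowerSeries.X_dvd_iff.mpr hf) m
  exact PowerSeries.X_pow_dvd_iff.mp hd k h

private lemma coeff_delta (p : PowerSeries ℂ) (i : ℕ) :
    PowerSeries.coeff i (delta p) = (i : ℂ) * PowerSeries.coeff i p := by
  cases i with
  | zero => simp [delta]
  | succ i =>
    rw [delta, PowerSeries.coeff_succ_X_mul, coeff_derivativeFun']
    push_cast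
    ring

private lemma delta_mul (a b : PowerSeries ℂ) :
    delta (a * b) = delta a * b + a * delta b := by
  rw [delta, PowerSeries.derivativeFun_mul, delta, delta]
  simp only [smul_eq_mul]
  ring

private lemma delta_one_sub (h : PowerSeries ℂ) : delta (1 - h) = - delta h := by
  ext i
  rw [map_neg, coeff_delta, coeff_delta, map_sub, PowerSeries.coeff_one]
  cases i with
  | zero => simp
  | succ i => simp

private lemma derivFun_pow (f : PowerSeries ℂ) (m : ℕ) :
    PowerSeries.derivativeFun (f ^ (m + 1)) =
      PowerSeries.C ((m : ℂ) + 1) * (f ^ m * PowerSeries.derivativeFun f) := by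
  induction m with
  | zero => simp
  | succ m ih =>
    rw [pow_succ, PowerSeries.derivativeFun_mul, ih]
    simp only [smul_eq_mul, map_add, map_one, map_natCast]
    push_cast
    ring

private lemma delta_expPS (f : PowerSeries ℂ) (hf : PowerSeries.constantCoeff f = 0) :
    delta (expPS f) = delta f * expPS f := by
  have key : PowerSeries.derivativeFun (expPS f) = PowerSeries.derivativeFun f * expPS f := by
    ext d
    rw [coeff_derivativeFun']
    have hL : PowerSeries.coeff (d + 1) (expPS f)
        = ∑ m ∈ Finset.range (d + 1),
            PowerSeries.coeff (d + 1) (f ^ (m + 1)) / ((m + 1).factorial : ℂ) := by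
      rw [expPS, PowerSeries.coeff_mk, Finset.sum_range_succ']
      simp
    have hterm : ∀ m : ℕ,
        PowerSeries.coeff (d + 1) (f ^ (m + 1)) / ((m + 1).factorial : ℂ) * ((d : ℂ) + 1)
          = PowerSeries.coeff d (PowerSeries.derivativeFun f * f ^ m) / (m.factorial : ℂ) := by
      intro m
      have h1 := coeff_derivativeFun' (f ^ (m + 1)) d
      rw [derivFun_pow, PowerSeries.coeff_C_mul] at h1
      have h2 : ((m + 1).factorial : ℂ) = ((m : ℂ) + 1) * (m.factorial : ℂ) := by
        rw [Nat.factorial_succ]; push_cast; ring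
      have h3 : ((m : ℂ) + 1) ≠ 0 := Nat.cast_add_one_ne_zero m
      rw [mul_comm (PowerSeries.derivativeFun f) (f ^ m), h2, div_mul_eq_mul_div, ← h1,
        mul_div_mul_left _ _ h3]
    have hR : PowerSeries.coeff d (PowerSeries.derivativeFun f * expPS f)
        = ∑ m ∈ Finset.range (d + 1),
            PowerSeries.coeff d (PowerSeries.derivativeFun f * f ^ m) / (m.factorial : ℂ) := by
      rw [PowerSeries.coeff_mul]
      have step : ∀ p ∈ Finset.HasAntidiagonal.antidiagonal d,
          PowerSeries.coeff p.1 (PowerSeries.derivativeFun f) * PowerSeries.coeff p.2 (expPS f)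
            = ∑ m ∈ Finset.range (d + 1),
                PowerSeries.coeff p.1 (PowerSeries.derivativeFun f)
                  * PowerSeries.coeff p.2 (f ^ m) / (m.factorial : ℂ) := by
        intro p hp
        have hp2 : p.2 ≤ d := by
          have := Finset.HasAntidiagonal.mem_antidiagonal.mp hp; omega
        rw [expPS, PowerSeries.coeff_mk, Finset.mul_sum]
        rw [Finset.sum_subset (Finset.range_subset_range.mpr (by omega) :
              Finset.range (p.2 + 1) ⊆ Finset.range (d + 1))]
        · exact Finset.sum_congr rfl fun m _ => by ring
        · intro m hm hm'
          have hlt : p.2 < m := by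
            simp only [Finset.mem_range] at hm hm'; omega
          rw [coeff_pow_zero hf hlt]
          simp
      rw [Finset.sum_congr rfl step, Finset.sum_comm]
      refine Finset.sum_congr rfl fun m _ => ?_
      rw [PowerSeries.coeff_mul, Finset.sum_div]
    rw [hL, hR, Finset.sum_mul]
    exact Finset.sum_congr rfl fun m _ => hterm m
  rw [delta, delta, key, mul_assoc]

private lemma mod_unique (f : PowerSeries ℂ) (N : ℕ) (a b : PowerSeries ℂ)
    (h0 : PowerSeries.coeff 0 a = PowerSeries.coeff 0 b)
    (ha : ∀ i < N, PowerSeries.coeff i (delta a) = PowerSeries.coeff i (delta f * a))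
    (hb : ∀ i < N, PowerSeries.coeff i (delta b) = PowerSeries.coeff i (delta f * b)) :
    modX N a b := by
  intro i
  induction i using Nat.strong_induction_on with
  | _ i ih =>
    intro hi
    cases i with
    | zero => exact h0
    | succ i =>
      have key : PowerSeries.coeff (i + 1) (delta f * a)
          = PowerSeries.coeff (i + 1) (delta f * b) := by
        rw [PowerSeries.coeff_mul, PowerSeries.coeff_mul]
        refine Finset.sum_congr rfl fun p hp => ?_
        have hps := Finset.HasAntidiagonal.mem_antidiagonal.mp hp
        rcases Nat.lt_or_ge p.2 (i + 1) with hlt | hge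
        · rw [ih p.2 (by omega) (by omega)]
        · have hp1 : p.1 = 0 := by omega
          simp [hp1, coeff_delta]
      have hA := ha _ hi
      have hB := hb _ hi
      rw [coeff_delta] at hA hB
      have : ((i : ℂ) + 1) * PowerSeries.coeff (i + 1) a
          = ((i : ℂ) + 1) * PowerSeries.coeff (i + 1) b := by
        push_cast at hA hB
        rw [hA, hB, key]
      exact mul_left_cancel₀ (Nat.cast_add_one_ne_zero i) this

/-- Newton correction step: if `f` has zero constant coefficient, `n ≥ 1`, `g₀` has
constant coefficient `1`, `h ≡ 0 (mod x^n)`, and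
`δ(g₀) ≡ g₀ · (δ(f) + δ(h)) (mod x^{2n})`, then
`exp(f) ≡ g₀ · (1 − h) (mod x^{2n})`. -/
theorem newton_correction (f g₀ h : PowerSeries ℂ) (n : ℕ)
    (hf : PowerSeries.constantCoeff f = 0) (hn : 1 ≤ n)
    (hg₀ : PowerSeries.constantCoeff g₀ = 1)
    (hh : modX n h 0)
    (hmain : modX (2 * n) (delta g₀) (g₀ * (delta f + delta h))) :
    modX (2 * n) (expPS f) (g₀ * (1 - h)) := by
  have h0h : PowerSeries.coeff 0 h = 0 := by simpa using hh 0 hn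
  have hcoef_h : ∀ i < n, PowerSeries.coeff i h = 0 := fun i hi => by simpa using hh i hi
  have hdh : ∀ i < n, PowerSeries.coeff i (delta h) = 0 := fun i hi => by
    rw [coeff_delta, hcoef_h i hi, mul_zero]
  have hzero : ∀ i < 2 * n, PowerSeries.coeff i (g₀ * (delta h * h)) = 0 := by
    intro i hi
    rw [PowerSeries.coeff_mul]
    refine Finset.sum_eq_zero fun p hp => ?_
    have hps := Finset.HasAntidiagonal.mem_antidiagonal.mp hp
    rw [PowerSeries.coeff_mul, Finset.mul_sum]
    refine Finset.sum_eq_zero fun q hq => ?_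
    have hqs := Finset.HasAntidiagonal.mem_antidiagonal.mp hq
    rcases Nat.lt_or_ge q.1 n with h1 | h1
    · rw [hdh q.1 h1]; ring
    · have h2 : q.2 < n := by omega
      rw [hcoef_h q.2 h2]; ring
  apply mod_unique f (2 * n)
  · rw [expPS, PowerSeries.coeff_mk]
    rw [PowerSeries.coeff_mul]
    simp [h0h, hg₀, PowerSeries.coeff_zero_eq_constantCoeff]
  · intro i _
    rw [delta_expPS f hf]
  · intro i hi
    have e1 : delta (g₀ * (1 - h)) = delta g₀ * (1 - h) - g₀ * delta h := by
      rw [delta_mul, delta_one_sub]; ring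
    have e2 : delta f * (g₀ * (1 - h))
        = (g₀ * (delta f + delta h)) * (1 - h) - g₀ * delta h + g₀ * (delta h * h) := by
      ring
    rw [e1, e2, map_sub, map_add, map_sub, hzero i hi, add_zero]
    congr 1
    rw [PowerSeries.coeff_mul, PowerSeries.coeff_mul]
    refine Finset.sum_congr rfl fun p hp => ?_
    have hps := Finset.HasAntidiagonal.mem_antidiagonal.mp hp
    rw [hmain p.1 (by omega)]
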